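/- arXiv:2510.17610 — 4 statements merged into one kernel-verified Lean document; each statement's English description precedes it below -/
import Mathlib

section
/- Let V be a finite set and f : P(V) → ℝ a monotone submodular function. Then for any sets A, B ⊆ V, f(B) ≤ f(A) + Σ_{v ∈ B \ A} Δ(f, v | A), i.e., the value of f at B is bounded above by f(A) plus the sum over the elements v of B not in A of the marginal gain of v at A. -/
/-- for a monotone submodular `f` and any `A, B ⊆ V`,
`f B ≤ f A + ∑_{v ∈ B \ A} Δ(f, v | A)`. -/
theorem le_add_sum_marginal_gains
    {V : Type*} [Fintype V] [DecidableEq V] (f : Finset V → ℝ)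
    (hmono : ∀ A B : Finset V, A ⊆ B → f A ≤ f B)
    (hsub : ∀ A B : Finset V, A ⊆ B → ∀ v ∉ B,
        f (insert v B) - f B ≤ f (insert v A) - f A)
    (A B : Finset V) :
    f B ≤ f A + ∑ v ∈ B \ A, (f (insert v A) - f A) := by
  have key : ∀ S : Finset V, f (A ∪ S) ≤ f A + ∑ v ∈ S \ A, (f (insert v A) - f A) := by
    intro S
    induction S using Finset.induction_on with
    | empty => simp
    | @insert v S hv ih =>
      by_cases hvA : v ∈ A
      · have h1 : A ∪ insert v S = A ∪ S := by
          rw [Finset.union_insert, Finset.insert_eq_self.mpr (by simp [hvA])]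
        have h2 : insert v S \ A = S \ A := by
          rw [Finset.insert_sdiff_of_mem _ hvA]
        rw [h1, h2]; exact ih
      · have h1 : A ∪ insert v S = insert v (A ∪ S) := by
          rw [Finset.union_insert]
        have h2 : insert v S \ A = insert v (S \ A) := by
          rw [Finset.insert_sdiff_of_notMem _ hvA]
        have hvAS : v ∉ A ∪ S := by simp [hvA, hv]
        have hsub' := hsub A (A ∪ S) Finset.subset_union_left v hvAS
        have hvSA : v ∉ S \ A := by simp [hv]
        rw [h1, h2, Finset.sum_insert hvSA]
        have : f (insert v (A ∪ S)) ≤ f (A ∪ S) + (f (insert v A) - f A) := by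
          linarith
        linarith
  calc f B ≤ f (A ∪ B) := hmono _ _ Finset.subset_union_right
    _ ≤ _ := key B
end

section
/- Let V be a finite set with n elements, let f : P(V) → [0, ∞) be a monotone submodular function with f(∅) = 0, and let k ∈ {1, …, n}. Let S₀ = ∅ and, for l = 1, …, k, let S_l = S_{l−1} ∪ {v_l} where v_l ∈ V \ S_{l−1} maximizes the marginal gain Δ(f, v | S_{l−1}) over v ∈ V \ S_{l−1} (the greedy sequence). Let S* be any subset of V with |S*| = k. Then for every l ∈ {0, …, k−1}, f(S*) − f(S_l) ≤ k·(f(S_{l+1}) − f(S_l)). -/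
lemma greedy_sum_bound {V : Type*} [DecidableEq V] (f : Finset V → ℝ)
    (hmono : ∀ A B : Finset V, A ⊆ B → f A ≤ f B)
    (hsub : ∀ A B : Finset V, A ⊆ B → ∀ v ∉ B,
        f (insert v B) - f B ≤ f (insert v A) - f A) :
    ∀ (B A : Finset V), f (A ∪ B) - f A ≤ ∑ v ∈ B, (f (insert v A) - f A) := by
  intro B
  induction B using Finset.induction_on with
  | empty => intro A; simp
  | insert _ _ hb ih =>
    rename_i b B'
    intro A
    rw [Finset.sum_insert hb, Finset.union_insert]
    by_cases hbA : b ∈ A ∪ B'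
    · rw [Finset.insert_eq_self.mpr hbA]
      have h1 := ih A
      have h2 : 0 ≤ f (insert b A) - f A := by
        have := hmono A (insert b A) (Finset.subset_insert _ _); linarith
      linarith
    · have h1 : f (insert b (A ∪ B')) - f (A ∪ B') ≤ f (insert b A) - f A :=
        hsub A (A ∪ B') Finset.subset_union_left b hbA
      have h2 := ih A
      linarith

/-- along the greedy sequence `S₀ = ∅`,
`S_{l+1} = S_l ∪ {argmax of marginal gain}`, for any `S*` with `|S*| = k`
and any `l ∈ {0, …, k-1}`,
`f S* - f (S l) ≤ k * (f (S (l+1)) - f (S l))`. -/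
theorem greedy_per_step_gain
    {V : Type*} [Fintype V] [DecidableEq V] (f : Finset V → ℝ)
    (hnonneg : ∀ A : Finset V, 0 ≤ f A)
    (hmono : ∀ A B : Finset V, A ⊆ B → f A ≤ f B)
    (hsub : ∀ A B : Finset V, A ⊆ B → ∀ v ∉ B,
        f (insert v B) - f B ≤ f (insert v A) - f A)
    (hf0 : f ∅ = 0)
    (k : ℕ) (hk1 : 1 ≤ k) (hkn : k ≤ Fintype.card V)
    (S : ℕ → Finset V) (hS0 : S 0 = ∅)
    (hstep : ∀ l < k, ∃ w ∉ S l,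
        S (l + 1) = insert w (S l) ∧
        ∀ u ∉ S l, f (insert u (S l)) - f (S l) ≤ f (insert w (S l)) - f (S l))
    (Sstar : Finset V) (hSstar : Sstar.card = k) :
    ∀ l < k, f Sstar - f (S l) ≤ (k : ℝ) * (f (S (l + 1)) - f (S l)) := by
  intro l hl
  obtain ⟨w, hw, hSsucc, hmax⟩ := hstep l hl
  set g : ℝ := f (S (l + 1)) - f (S l) with hg
  have hgval : g = f (insert w (S l)) - f (S l) := by rw [hg, hSsucc]
  have hg0 : 0 ≤ g := by
    rw [hgval]
    have := hmono (S l) (insert w (S l)) (Finset.subset_insert _ _); linarith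
  have h1 : f Sstar ≤ f (S l ∪ Sstar) := hmono _ _ Finset.subset_union_right
  have h2 := greedy_sum_bound f hmono hsub Sstar (S l)
  have h3 : ∑ v ∈ Sstar, (f (insert v (S l)) - f (S l)) ≤ ∑ _v ∈ Sstar, g := by
    apply Finset.sum_le_sum
    intro v _
    by_cases hv : v ∈ S l
    · rw [Finset.insert_eq_self.mpr hv]; simpa using hg0
    · rw [hgval]; exact hmax v hv
  have h4 : ∑ _v ∈ Sstar, g = (k : ℝ) * g := by
    rw [Finset.sum_const, hSstar, nsmul_eq_mul]
  linarith
end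

section
/- Let V be a finite set with n elements, let f : P(V) → [0, ∞) be a monotone submodular function with f(∅) = 0, and let k ∈ {1, …, n} with k ≥ 1. Let {S_l}_{l=0}^{k} be the greedy sequence and S* a subset of V of cardinality k maximizing f over subsets of size k. Define the optimality gap δ_l := f(S*) − f(S_l). Then for every l ∈ {0, …, k−1}, δ_{l+1} ≤ (1 − 1/k)·δ_l. -/
lemma telescope_sub {V : Type*} [DecidableEq V] (f : Finset V → ℝ)
    (hsub : ∀ A B : Finset V, A ⊆ B → ∀ v ∉ B,
        f (insert v B) - f B ≤ f (insert v A) - f A) :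
    ∀ (T A : Finset V), f (A ∪ T) - f A ≤ ∑ v ∈ T \ A, (f (insert v A) - f A) := by
  intro T
  induction T using Finset.induction_on with
  | empty => intro A; simp
  | insert _ _ ha ih =>
    rename_i a T
    intro A
    by_cases haA : a ∈ A
    · have h1 : insert a T \ A = T \ A := by
        ext x; simp only [Finset.mem_sdiff, Finset.mem_insert]
        constructor
        · rintro ⟨(rfl | hx), hxA⟩
          · exact absurd haA hxA
          · exact ⟨hx, hxA⟩
        · exact fun ⟨hx, hxA⟩ => ⟨Or.inr hx, hxA⟩
      have h2 : A ∪ insert a T = A ∪ T := by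
        rw [Finset.union_insert, Finset.insert_eq_self.mpr (Finset.mem_union_left T haA)]
      rw [h1, h2]; exact ih A
    · have haUT : a ∉ A ∪ T := by simp [Finset.mem_union, haA, ha]
      have hsplit : insert a T \ A = insert a (T \ A) := by
        ext x; simp only [Finset.mem_sdiff, Finset.mem_insert]
        constructor
        · rintro ⟨(rfl | hx), hxA⟩
          · exact Or.inl rfl
          · exact Or.inr ⟨hx, hxA⟩
        · rintro (rfl | ⟨hx, hxA⟩)
          · exact ⟨Or.inl rfl, haA⟩
          · exact ⟨Or.inr hx, hxA⟩
      have haTA : a ∉ T \ A := fun h => ha (Finset.mem_sdiff.mp h).1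
      rw [hsplit, Finset.sum_insert haTA, Finset.union_insert]
      have h3 : f (insert a (A ∪ T)) - f (A ∪ T) ≤ f (insert a A) - f A :=
        hsub A (A ∪ T) (Finset.subset_union_left) a haUT
      have := ih A
      linarith

/-- with `S*` a maximizer of `f` over subsets of cardinality `k`
and `δ_l = f S* - f (S l)` the optimality gap along the greedy sequence,
`δ_{l+1} ≤ (1 - 1/k) * δ_l` for every `l ∈ {0, …, k-1}`. -/
theorem greedy_gap_contraction
    {V : Type*} [Fintype V] [DecidableEq V] (f : Finset V → ℝ)
    (hnonneg : ∀ A : Finset V, 0 ≤ f A)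
    (hmono : ∀ A B : Finset V, A ⊆ B → f A ≤ f B)
    (hsub : ∀ A B : Finset V, A ⊆ B → ∀ v ∉ B,
        f (insert v B) - f B ≤ f (insert v A) - f A)
    (hf0 : f ∅ = 0)
    (k : ℕ) (hk1 : 1 ≤ k) (hkn : k ≤ Fintype.card V)
    (S : ℕ → Finset V) (hS0 : S 0 = ∅)
    (hstep : ∀ l < k, ∃ w ∉ S l,
        S (l + 1) = insert w (S l) ∧
        ∀ u ∉ S l, f (insert u (S l)) - f (S l) ≤ f (insert w (S l)) - f (S l))
    (Sstar : Finset V) (hSstar : Sstar.card = k)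
    (hmax : ∀ T : Finset V, T.card = k → f T ≤ f Sstar) :
    ∀ l < k, f Sstar - f (S (l + 1)) ≤ (1 - 1 / (k : ℝ)) * (f Sstar - f (S l)) := by
  intro l hl
  obtain ⟨w, hw, hSl1, hwmax⟩ := hstep l hl
  set A := S l
  set g : ℝ := f (insert w A) - f A with hg
  have hgnn : 0 ≤ g := by
    have := hmono A (insert w A) (Finset.subset_insert w A)
    linarith
  -- f Sstar - f A ≤ k * g
  have key : f Sstar - f A ≤ (k : ℝ) * g := by
    have h1 : f Sstar ≤ f (A ∪ Sstar) := hmono _ _ (Finset.subset_union_right)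
    have h2 := telescope_sub f hsub Sstar A
    have h3 : ∑ v ∈ Sstar \ A, (f (insert v A) - f A) ≤ ∑ _v ∈ Sstar \ A, g := by
      apply Finset.sum_le_sum
      intro v hv
      exact hwmax v (Finset.mem_sdiff.mp hv).2
    have h4 : ∑ _v ∈ Sstar \ A, g = ((Sstar \ A).card : ℝ) * g := by
      rw [Finset.sum_const, nsmul_eq_mul]
    have h5 : ((Sstar \ A).card : ℝ) ≤ (k : ℝ) := by
      have : (Sstar \ A).card ≤ Sstar.card := Finset.card_le_card (Finset.sdiff_subset)
      exact_mod_cast this.trans_eq hSstar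
    have h6 : ((Sstar \ A).card : ℝ) * g ≤ (k : ℝ) * g :=
      mul_le_mul_of_nonneg_right h5 hgnn
    linarith
  have hkpos : (0 : ℝ) < (k : ℝ) := by exact_mod_cast hk1
  have hgap : (f Sstar - f A) / k ≤ g := by
    rw [div_le_iff₀ hkpos]
    linarith [key]
  have hS1 : f (S (l + 1)) = f A + g := by rw [hSl1, hg]; ring
  rw [hS1]
  have : (1 - 1 / (k : ℝ)) * (f Sstar - f A) = (f Sstar - f A) - (f Sstar - f A) / k := by
    field_simp
  rw [this]
  linarith
end

section
/- Let V be a finite set with n elements and let f : P(V) → [0, ∞) be a monotone submodular function with f(∅) = 0. Let k ∈ {1, …, n} and let {S_l}_{l=1}^{k} be produced by the greedy procedure: S₀ = ∅ and S_l = S_{l−1} ∪ {argmax_{v ∈ V \ S_{l−1}} Δ(f, v | S_{l−1})} for l = 1, …, k. Then f(S_k) ≥ (1 − 1/e) · max{ f(S) : S ⊆ V, |S| = k }. -/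
/-- Telescoping bound from submodularity. -/
lemma sum_marg_aux {V : Type*} [DecidableEq V] (f : Finset V → ℝ)
    (hsub : ∀ A B : Finset V, A ⊆ B → ∀ v ∉ B,
        f (insert v B) - f B ≤ f (insert v A) - f A)
    (T A : Finset V) :
    f (A ∪ T) - f A ≤ ∑ v ∈ T, (f (insert v A) - f A) := by
  induction T using Finset.induction_on with
  | empty => simp
  | @insert v T' hv ih =>
    rw [Finset.sum_insert hv, Finset.union_insert]
    by_cases hvA : v ∈ A
    · have h1 : insert v (A ∪ T') = A ∪ T' := by
        apply Finset.insert_eq_self.mpr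
        exact Finset.mem_union_left _ hvA
      have h2 : insert v A = A := Finset.insert_eq_self.mpr hvA
      rw [h1, h2]
      linarith
    · by_cases hvT : v ∈ A ∪ T'
      · exfalso
        rcases Finset.mem_union.mp hvT with h | h
        · exact hvA h
        · exact hv h
      · have := hsub A (A ∪ T') Finset.subset_union_left v hvT
        linarith

/-- Nemhauser–Wolsey–Fisher: the greedy sequence satisfies
`f (S k) ≥ (1 - 1/e) * max { f S : |S| = k }`. -/
theorem greedy_one_sub_inv_exp_guarantee
    {V : Type*} [Fintype V] [DecidableEq V] (f : Finset V → ℝ)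
    (hnonneg : ∀ A : Finset V, 0 ≤ f A)
    (hmono : ∀ A B : Finset V, A ⊆ B → f A ≤ f B)
    (hsub : ∀ A B : Finset V, A ⊆ B → ∀ v ∉ B,
        f (insert v B) - f B ≤ f (insert v A) - f A)
    (hf0 : f ∅ = 0)
    (k : ℕ) (hk1 : 1 ≤ k) (hkn : k ≤ Fintype.card V)
    (S : ℕ → Finset V) (hS0 : S 0 = ∅)
    (hstep : ∀ l < k, ∃ w ∉ S l,
        S (l + 1) = insert w (S l) ∧
        ∀ u ∉ S l, f (insert u (S l)) - f (S l) ≤ f (insert w (S l)) - f (S l)) :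
    (1 - (Real.exp 1)⁻¹) *
        (Finset.powersetCard k (Finset.univ : Finset V)).sup'
          (Finset.powersetCard_nonempty.mpr (by simpa using hkn)) f
      ≤ f (S k) := by
  set s := Finset.powersetCard k (Finset.univ : Finset V) with hs
  have hne : s.Nonempty := Finset.powersetCard_nonempty.mpr (by simpa using hkn)
  obtain ⟨T, hT, hTopt⟩ := Finset.exists_mem_eq_sup' hne f
  set OPT := s.sup' hne f with hOPT
  have hTcard : T.card = k := (Finset.mem_powersetCard.mp hT).2
  have hOPT0 : 0 ≤ OPT := hTopt ▸ hnonneg T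
  have hkpos : (0:ℝ) < (k:ℝ) := by exact_mod_cast hk1
  have hk0 : (0:ℝ) ≤ 1 - 1/(k:ℝ) := by
    have : 1/(k:ℝ) ≤ 1 := by
      rw [div_le_one hkpos]; exact_mod_cast hk1
    linarith
  have key : ∀ l < k, OPT - f (S (l+1)) ≤ (1 - 1/(k:ℝ)) * (OPT - f (S l)) := by
    intro l hl
    obtain ⟨w, hw, hSl1, hmax⟩ := hstep l hl
    set g := f (S (l+1)) - f (S l) with hgdef
    have hg0 : 0 ≤ g := by
      rw [hgdef, hSl1]
      have := hmono (S l) (insert w (S l)) (Finset.subset_insert _ _)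
      linarith
    have htel := sum_marg_aux f hsub (T \ S l) (S l)
    have hsum : ∑ v ∈ T \ S l, (f (insert v (S l)) - f (S l))
        ≤ (T \ S l).card • g := by
      apply Finset.sum_le_card_nsmul
      intro v hv
      rw [hgdef, hSl1]
      exact hmax v (Finset.mem_sdiff.mp hv).2
    have hcard : ((T \ S l).card : ℝ) ≤ (k:ℝ) := by
      have h := Finset.card_le_card (Finset.sdiff_subset (s := T) (t := S l))
      have : (T \ S l).card ≤ k := hTcard ▸ h
      exact_mod_cast this
    have hOT : OPT ≤ f (S l ∪ (T \ S l)) := by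
      rw [hTopt]
      apply hmono
      intro x hx
      by_cases hxS : x ∈ S l
      · exact Finset.mem_union_left _ hxS
      · exact Finset.mem_union_right _ (Finset.mem_sdiff.mpr ⟨hx, hxS⟩)
    have hsmul : ((T \ S l).card • g : ℝ) = ((T \ S l).card : ℝ) * g := by
      simp [nsmul_eq_mul]
    have hmain : OPT - f (S l) ≤ (k:ℝ) * g := by
      have h1 : ((T \ S l).card : ℝ) * g ≤ (k:ℝ) * g :=
        mul_le_mul_of_nonneg_right hcard hg0
      rw [hsmul] at hsum
      linarith
    have hdiv : (1/(k:ℝ)) * (OPT - f (S l)) ≤ g := by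
      rw [div_mul_eq_mul_div, div_le_iff₀ hkpos]
      linarith [hmain]
    have : OPT - f (S (l+1)) = (OPT - f (S l)) - g := by rw [hgdef]; ring
    rw [this]
    linarith
  have main : ∀ l ≤ k, OPT - f (S l) ≤ (1 - 1/(k:ℝ))^l * OPT := by
    intro l hl
    induction l with
    | zero => simp [hS0, hf0]
    | succ l ih =>
      have hlk : l < k := hl
      have h1 := key l hlk
      have h2 := ih (le_of_lt hlk)
      calc OPT - f (S (l+1)) ≤ (1 - 1/(k:ℝ)) * (OPT - f (S l)) := h1
        _ ≤ (1 - 1/(k:ℝ)) * ((1 - 1/(k:ℝ))^l * OPT) :=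
            mul_le_mul_of_nonneg_left h2 hk0
        _ = (1 - 1/(k:ℝ))^(l+1) * OPT := by ring
  have hfin := main k le_rfl
  have hexp : (1 - 1/(k:ℝ))^k ≤ (Real.exp 1)⁻¹ := by
    have h1 : (1 - 1/(k:ℝ)) ≤ Real.exp (-(1/(k:ℝ))) := by
      have := Real.add_one_le_exp (-(1/(k:ℝ)))
      linarith
    have hkne : (k:ℝ) ≠ 0 := ne_of_gt hkpos
    calc (1 - 1/(k:ℝ))^k ≤ (Real.exp (-(1/(k:ℝ))))^k := pow_le_pow_left₀ hk0 h1 k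
      _ = Real.exp ((k:ℝ) * (-(1/(k:ℝ)))) := (Real.exp_nat_mul _ k).symm
      _ = Real.exp (-1) := by
          congr 1
          field_simp
      _ = (Real.exp 1)⁻¹ := Real.exp_neg 1
  have hlast : (1 - 1/(k:ℝ))^k * OPT ≤ (Real.exp 1)⁻¹ * OPT :=
    mul_le_mul_of_nonneg_right hexp hOPT0
  linarith
end
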